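/- Let U, V, Z be finite sets, H_A, H_B finite-dimensional complex Hilbert spaces, {Λ^A_u}_{u∈U} a POVM on H_A, {Λ^B_v}_{v∈V} a POVM on H_B, ρ^{AB} a density operator on H_A ⊗ H_B, and set ω = ρ^{AB} and p(u,v) = Tr{(Λ^A_u ⊗ Λ^B_v) ρ^{AB}}. Let g : U × V → Z, let G^A be a finite collection of subsets of U and G^B a finite collection of subsets of V, and let p_A(w_A|u) ≥ 0 satisfy ∑_{w_A∈G^A} p_A(w_A|u) = 1 for every u and p_A(w_A|u) = 0 unless u ∈ w_A, and similarly p_B(w_B|v). Define Λ^A_{w_A} = ∑_{u∈w_A} p_A(w_A|u) Λ^A_u and Λ^B_{w_B} = ∑_{v∈w_B} p_B(w_B|v) Λ^B_v. Suppose g̃ : G^A × G^B → Z satisfies g̃(w_A,w_B) = g(u,v) whenever u ∈ w_A, v ∈ w_B, p_A(w_A|u) > 0, p_B(w_B|v) > 0 and p(u,v) > 0. Then for every z ∈ Z: √ω (∑_{(w_A,w_B): g̃(w_A,w_B)=z} Λ^A_{w_A} ⊗ Λ^B_{w_B}) √ω = √ω (∑_{(u,v): g(u,v)=z} Λ^A_u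 ⊗ Λ^B_v) √ω. -/

import Mathlib

open scoped Kronecker ComplexOrder
open Matrix

-- The positive semidefinite square root of a matrix (junk value `0` if not PSD).
open Classical in
noncomputable def matSqrt {n : Type*} [Fintype n] [DecidableEq n]
    (M : Matrix n n ℂ) : Matrix n n ℂ :=
  if h : M.PosSemidef then
    (h.1.eigenvectorUnitary : Matrix n n ℂ) *
      Matrix.diagonal ((↑) ∘ (fun x : ℝ => Real.sqrt x) ∘ h.1.eigenvalues) *
      (star h.1.eigenvectorUnitary : Matrix n n ℂ)
  else 0

lemma matSqrt_spec {n : Type*} [Fintype n] [DecidableEq n]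
    {M : Matrix n n ℂ} (hM : M.PosSemidef) :
    (matSqrt M).PosSemidef ∧ matSqrt M * matSqrt M = M := by
  have hD : (Matrix.diagonal ((↑) ∘ (fun x : ℝ => Real.sqrt x) ∘ hM.1.eigenvalues) :
      Matrix n n ℂ).PosSemidef := by
    rw [Matrix.posSemidef_diagonal_iff]
    intro i
    simp only [Function.comp_apply]
    exact_mod_cast Real.sqrt_nonneg _
  have hdef : matSqrt M = (hM.1.eigenvectorUnitary : Matrix n n ℂ) *
      Matrix.diagonal ((↑) ∘ (fun x : ℝ => Real.sqrt x) ∘ hM.1.eigenvalues) *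
      (star hM.1.eigenvectorUnitary : Matrix n n ℂ) := by
    unfold matSqrt
    rw [dif_pos hM]
  refine ⟨?_, ?_⟩
  · rw [hdef, Matrix.star_eq_conjTranspose]
    exact hD.mul_mul_conjTranspose_same _
  · rw [hdef]
    conv_rhs => rw [hM.1.spectral_theorem, Unitary.conjStarAlgAut_apply]
    have h1 : (star hM.1.eigenvectorUnitary : Matrix n n ℂ) *
        (hM.1.eigenvectorUnitary : Matrix n n ℂ) = 1 := Unitary.coe_star_mul_self _
    have h2 : (Matrix.diagonal ((↑) ∘ (fun x : ℝ => Real.sqrt x) ∘ hM.1.eigenvalues) :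
        Matrix n n ℂ) * Matrix.diagonal ((↑) ∘ (fun x : ℝ => Real.sqrt x) ∘ hM.1.eigenvalues)
        = Matrix.diagonal (RCLike.ofReal ∘ hM.1.eigenvalues) := by
      rw [Matrix.diagonal_mul_diagonal]
      congr 1
      funext i
      simp only [Function.comp_apply]
      rw [← Complex.ofReal_mul, Real.mul_self_sqrt (hM.eigenvalues_nonneg i)]
      rfl
    calc _ = (hM.1.eigenvectorUnitary : Matrix n n ℂ) *
          (Matrix.diagonal ((↑) ∘ (fun x : ℝ => Real.sqrt x) ∘ hM.1.eigenvalues) *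
          ((star hM.1.eigenvectorUnitary : Matrix n n ℂ) *
          (hM.1.eigenvectorUnitary : Matrix n n ℂ)) *
          Matrix.diagonal ((↑) ∘ (fun x : ℝ => Real.sqrt x) ∘ hM.1.eigenvalues)) *
          (star hM.1.eigenvectorUnitary : Matrix n n ℂ) := by
            simp only [Matrix.mul_assoc]
      _ = _ := by rw [h1, Matrix.mul_one, h2]

lemma psd_exists_eq_conjTranspose_mul_self {n : Type*} [Fintype n] [DecidableEq n]
    {M : Matrix n n ℂ} (hM : M.PosSemidef) : ∃ B : Matrix n n ℂ, M = Bᴴ * B :=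
  ⟨matSqrt M, by rw [(matSqrt_spec hM).1.isHermitian.eq, (matSqrt_spec hM).2]⟩


lemma kron_conjTranspose {m n : Type*} [Fintype m] [Fintype n]
    (A : Matrix m m ℂ) (B : Matrix n n ℂ) :
    (A ⊗ₖ B)ᴴ = Aᴴ ⊗ₖ Bᴴ := by
  ext ⟨a, b⟩ ⟨c, d⟩
  simp [Matrix.conjTranspose_apply, Matrix.kroneckerMap_apply, mul_comm]

lemma kron_posSemidef {m n : Type*} [Fintype m] [DecidableEq m] [Fintype n] [DecidableEq n]
    {A : Matrix m m ℂ} {B : Matrix n n ℂ}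
    (hA : A.PosSemidef) (hB : B.PosSemidef) : (A ⊗ₖ B).PosSemidef := by
  obtain ⟨C, rfl⟩ := psd_exists_eq_conjTranspose_mul_self hA
  obtain ⟨D, rfl⟩ := psd_exists_eq_conjTranspose_mul_self hB
  rw [Matrix.mul_kronecker_mul, ← kron_conjTranspose]
  exact Matrix.posSemidef_conjTranspose_mul_self _

lemma psd_eq_zero_of_trace_re_nonpos {n : Type*} [Fintype n] [DecidableEq n]
    {M : Matrix n n ℂ} (hM : M.PosSemidef) (h : M.trace.re ≤ 0) : M = 0 := by
  obtain ⟨B, rfl⟩ := psd_exists_eq_conjTranspose_mul_self hM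
  have htr : (Bᴴ * B).trace = ∑ j, ∑ i, (Complex.normSq (B i j) : ℂ) := by
    simp [Matrix.trace, Matrix.diag, Matrix.mul_apply, Matrix.conjTranspose_apply,
      Complex.normSq_eq_conj_mul_self]
  rw [htr] at h
  simp only [← Complex.ofReal_sum, Complex.ofReal_re] at h
  have hB : B = 0 := by
    ext i j
    have := (Finset.sum_eq_zero_iff_of_nonneg (fun j _ =>
      Finset.sum_nonneg (fun i _ => Complex.normSq_nonneg _))).mp
      (le_antisymm h (Finset.sum_nonneg (fun j _ =>
        Finset.sum_nonneg (fun i _ => Complex.normSq_nonneg _))))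
    have := (Finset.sum_eq_zero_iff_of_nonneg (fun i _ => Complex.normSq_nonneg _)).mp
      (this j (Finset.mem_univ j)) i (Finset.mem_univ i)
    exact Complex.normSq_eq_zero.mp this
  simp [hB]

lemma kron_sum_sum {m n U V : Type*} [Fintype m] [Fintype n]
    (s : Finset U) (t : Finset V) (f : U → Matrix m m ℂ) (h : V → Matrix n n ℂ) :
    (∑ u ∈ s, f u) ⊗ₖ (∑ v ∈ t, h v) = ∑ u ∈ s, ∑ v ∈ t, f u ⊗ₖ h v := by
  ext ⟨a, b⟩ ⟨c, d⟩
  simp only [Matrix.kroneckerMap_apply, Matrix.sum_apply]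
  rw [Finset.sum_mul_sum]

lemma ite_sum_zero {α β : Type*} [AddCommMonoid β] (c : Prop) [Decidable c]
    (s : Finset α) (f : α → β) :
    (if c then ∑ x ∈ s, f x else 0) = ∑ x ∈ s, (if c then f x else 0) := by
  split <;> simp

/-- Section V-3 of the paper: the coarse-grained measurement built from the
independent-set POVMs is, after sandwiching by `√ω`, equal to the target
measurement `Λ_z^{AB}`. -/
theorem sandwiched_coarse_grained_eq_target
    {U V Z HA HB : Type*}
    [Fintype U] [DecidableEq U] [Fintype V] [DecidableEq V]
    [Fintype Z] [DecidableEq Z]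
    [Fintype HA] [DecidableEq HA] [Fintype HB] [DecidableEq HB]
    -- the POVMs on H_A and H_B
    (ΛA : U → Matrix HA HA ℂ) (hΛA : ∀ u, (ΛA u).PosSemidef)
    (hΛAsum : ∑ u, ΛA u = 1)
    (ΛB : V → Matrix HB HB ℂ) (hΛB : ∀ v, (ΛB v).PosSemidef)
    (hΛBsum : ∑ v, ΛB v = 1)
    -- the density operator ρ^{AB} = ω
    (ρ : Matrix (HA × HB) (HA × HB) ℂ) (hρ : ρ.PosSemidef)
    (hρtr : ρ.trace = 1)
    -- the induced outcome probabilities p(u,v) = Tr{(Λ^A_u ⊗ Λ^B_v) ρ}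
    (p : U → V → ℝ)
    (hp : ∀ u v, p u v = (((ΛA u ⊗ₖ ΛB v) * ρ).trace).re)
    -- the function g and the collections of subsets G^A, G^B
    (g : U → V → Z)
    (GA : Finset (Finset U)) (GB : Finset (Finset V))
    -- the stochastic kernels p_A(w_A|u) and p_B(w_B|v)
    (pA : Finset U → U → ℝ)
    (hpA0 : ∀ wA u, 0 ≤ pA wA u)
    (hpA1 : ∀ u, ∑ wA ∈ GA, pA wA u = 1)
    (hpAmem : ∀ wA ∈ GA, ∀ u, u ∉ wA → pA wA u = 0)
    (pB : Finset V → V → ℝ)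
    (hpB0 : ∀ wB v, 0 ≤ pB wB v)
    (hpB1 : ∀ v, ∑ wB ∈ GB, pB wB v = 1)
    (hpBmem : ∀ wB ∈ GB, ∀ v, v ∉ wB → pB wB v = 0)
    -- the coarse-grained measurement operators
    (ΛAw : Finset U → Matrix HA HA ℂ)
    (hΛAw : ∀ wA, ΛAw wA = ∑ u ∈ wA, (pA wA u : ℂ) • ΛA u)
    (ΛBw : Finset V → Matrix HB HB ℂ)
    (hΛBw : ∀ wB, ΛBw wB = ∑ v ∈ wB, (pB wB v : ℂ) • ΛB v)
    -- the function g̃, consistent with g on positive-probability pairs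
    (gt : Finset U → Finset V → Z)
    (hgt : ∀ wA ∈ GA, ∀ wB ∈ GB, ∀ u ∈ wA, ∀ v ∈ wB,
      0 < pA wA u → 0 < pB wB v → 0 < p u v → gt wA wB = g u v) :
    ∀ z : Z,
      matSqrt ρ *
        (∑ wA ∈ GA, ∑ wB ∈ GB,
          if gt wA wB = z then ΛAw wA ⊗ₖ ΛBw wB else 0) * matSqrt ρ
      = matSqrt ρ *
        (∑ u : U, ∑ v : V,
          if g u v = z then ΛA u ⊗ₖ ΛB v else 0) * matSqrt ρ := by
  intro z
  set S : Matrix (HA × HB) (HA × HB) ℂ := matSqrt ρ with hSdef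
  have hSpsd : S.PosSemidef := (matSqrt_spec hρ).1
  have hSH : Sᴴ = S := hSpsd.isHermitian
  have hSS : S * S = ρ := (matSqrt_spec hρ).2
  set M : U → V → Matrix (HA × HB) (HA × HB) ℂ :=
    fun u v => S * (ΛA u ⊗ₖ ΛB v) * S with hMdef
  have hMpsd : ∀ u v, (M u v).PosSemidef := by
    intro u v
    have := (kron_posSemidef (hΛA u) (hΛB v)).mul_mul_conjTranspose_same S
    rwa [hSH] at this
  have hMzero : ∀ u v, ¬ 0 < p u v → M u v = 0 := by
    intro u v h
    apply psd_eq_zero_of_trace_re_nonpos (hMpsd u v)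
    have htr : (M u v).trace = (((ΛA u ⊗ₖ ΛB v)) * ρ).trace := by
      rw [hMdef]
      rw [Matrix.trace_mul_cycle, hSS, Matrix.trace_mul_comm]
    rw [htr, ← hp u v]
    exact le_of_not_gt h
  have key : ∀ u v,
      (∑ wA ∈ GA, ∑ wB ∈ GB,
        if gt wA wB = z then ((pA wA u * pB wB v : ℝ) : ℂ) • M u v else 0)
      = (if g u v = z then M u v else 0) := by
    intro u v
    by_cases hM0 : M u v = 0
    · simp [hM0]
    · have hpuv : 0 < p u v := by
        by_contra h; exact hM0 (hMzero u v h)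
      have hcongr : ∀ wA ∈ GA, ∀ wB ∈ GB,
          (if gt wA wB = z then ((pA wA u * pB wB v : ℝ) : ℂ) • M u v else 0)
          = (if g u v = z then ((pA wA u * pB wB v : ℝ) : ℂ) • M u v else 0) := by
        intro wA hwA wB hwB
        rcases eq_or_lt_of_le (hpA0 wA u) with h1 | h1
        · simp [← h1]
        rcases eq_or_lt_of_le (hpB0 wB v) with h2 | h2
        · simp [← h2]
        have hu : u ∈ wA := by
          by_contra hu; rw [hpAmem wA hwA u hu] at h1; exact lt_irrefl 0 h1
        have hv : v ∈ wB := by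
          by_contra hv; rw [hpBmem wB hwB v hv] at h2; exact lt_irrefl 0 h2
        rw [hgt wA hwA wB hwB u hu v hv h1 h2 hpuv]
      rw [Finset.sum_congr rfl fun wA hwA =>
        Finset.sum_congr rfl fun wB hwB => hcongr wA hwA wB hwB]
      by_cases hz : g u v = z
      · simp only [hz, if_true]
        simp_rw [← Finset.sum_smul, ← Complex.ofReal_sum,
          ← Finset.sum_mul_sum, hpA1 u, hpB1 v]
        norm_num
      · simp [hz]
  have expand : ∀ wA ∈ GA, ∀ wB ∈ GB, S * (ΛAw wA ⊗ₖ ΛBw wB) * S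
      = ∑ u : U, ∑ v : V, ((pA wA u * pB wB v : ℝ) : ℂ) • M u v := by
    intro wA hwA wB hwB
    rw [hΛAw, hΛBw, kron_sum_sum]
    simp_rw [Matrix.smul_kronecker, Matrix.kronecker_smul, smul_smul,
      Finset.mul_sum, Finset.sum_mul, mul_smul_comm, smul_mul_assoc]
    have hinner : ∀ u, (∑ v ∈ wB, ((pA wA u : ℂ) * (pB wB v : ℂ)) • (S * (ΛA u ⊗ₖ ΛB v) * S))
        = ∑ v : V, ((pA wA u * pB wB v : ℝ) : ℂ) • M u v := by
      intro u
      rw [Finset.sum_subset (Finset.subset_univ wB)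
        (fun v _ hv => by simp [hpBmem wB hwB v hv])]
      exact Finset.sum_congr rfl fun v _ => by push_cast; rfl
    rw [Finset.sum_congr rfl fun u _ => hinner u]
    rw [Finset.sum_subset (Finset.subset_univ wA)
      (fun u _ hu => by simp [hpAmem wA hwA u hu])]
  -- main computation
  calc S * (∑ wA ∈ GA, ∑ wB ∈ GB,
          if gt wA wB = z then ΛAw wA ⊗ₖ ΛBw wB else 0) * S
      = ∑ wA ∈ GA, ∑ wB ∈ GB,
          if gt wA wB = z then S * (ΛAw wA ⊗ₖ ΛBw wB) * S else 0 := by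
        simp only [Finset.mul_sum, Finset.sum_mul, mul_ite, ite_mul, mul_zero, zero_mul]
    _ = ∑ wA ∈ GA, ∑ wB ∈ GB, ∑ u : U, ∑ v : V,
          if gt wA wB = z then ((pA wA u * pB wB v : ℝ) : ℂ) • M u v else 0 := by
        refine Finset.sum_congr rfl fun wA hwA => Finset.sum_congr rfl fun wB hwB => ?_
        rw [expand wA hwA wB hwB, ite_sum_zero]
        exact Finset.sum_congr rfl fun u _ => ite_sum_zero _ _ _
    _ = ∑ u : U, ∑ v : V, ∑ wA ∈ GA, ∑ wB ∈ GB,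
          if gt wA wB = z then ((pA wA u * pB wB v : ℝ) : ℂ) • M u v else 0 := by
        exact (Finset.sum_congr rfl fun wA _ => Finset.sum_comm).trans
          (Finset.sum_comm.trans (Finset.sum_congr rfl fun u _ =>
            (Finset.sum_congr rfl fun wA _ => Finset.sum_comm).trans Finset.sum_comm))
    _ = ∑ u : U, ∑ v : V, if g u v = z then M u v else 0 := by
        exact Finset.sum_congr rfl fun u _ => Finset.sum_congr rfl fun v _ => key u v
    _ = S * (∑ u : U, ∑ v : V, if g u v = z then ΛA u ⊗ₖ ΛB v else 0) * S := by
        simp only [Finset.mul_sum, Finset.sum_mul, mul_ite, ite_mul, mul_zero, zero_mul, hMdef]
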